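/- Let (g_n^ε)_{n≥1} be a square-summable real sequence, let ε > 0 and τ > 1 satisfy 0 < τε < ‖g^ε‖ = (Σ_{n≥1} (g_n^ε)²)^{1/2}, and let ρ(μ) = (Σ_{n≥1} (μ²/(μ² + Φ(n,φ_ε)²))² (g_n^ε)²)^{1/2}. Then there exists a unique μ > 0 such that ρ(μ) = τε. -/

import Mathlib

open Filter Topology

/-- existence and uniqueness of the a posteriori parameter: if
`0 < τε < ‖g^ε‖` with `τ > 1`, there exists a unique `μ > 0` with `ρ(μ) = τε`. -/
theorem stmt_15
    (T D₁ D₂ C₁ C₂ : ℝ) (hT : 0 < T) (hD₁ : 0 < D₁) (hD₁₂ : D₁ ≤ D₂)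
    (hC₁ : 0 < C₁) (hC₁₂ : C₁ ≤ C₂)
    (a φε : ℝ → ℝ) (ha : ContinuousOn a (Set.Icc 0 T))
    (hφεc : ContinuousOn φε (Set.Icc 0 T))
    (haB : ∀ t ∈ Set.Icc 0 T, D₁ ≤ a t ∧ a t ≤ D₂)
    (hφεB : ∀ t ∈ Set.Icc 0 T, C₁ ≤ φε t ∧ φε t ≤ C₂)
    (A Bf : ℝ → ℝ) (hA : ∀ t, A t = ∫ s in (0:ℝ)..t, a s)
    (hBf : ∀ t, Bf t = A t - A T)
    (Φ : ℕ → (ℝ → ℝ) → ℝ)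
    (hΦ : ∀ (n : ℕ) (h : ℝ → ℝ), Φ n h = ∫ t in (0:ℝ)..T, Real.exp ((n:ℝ)^2 * Bf t) * h t)
    (gε : ℕ → ℝ)
    (hgεsum : Summable (fun n : ℕ => (gε (n+1))^2))
    (ε τ : ℝ) (hε : 0 < ε) (hτ : 1 < τ)
    (hτε : τ * ε < Real.sqrt (∑' n : ℕ, (gε (n+1))^2))
    (ρ : ℝ → ℝ)
    (hρ : ∀ μ : ℝ, ρ μ =
      Real.sqrt (∑' n : ℕ, (μ^2 / (μ^2 + (Φ (n+1) φε)^2))^2 * (gε (n+1))^2)) :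
    ∃! μ : ℝ, 0 < μ ∧ ρ μ = τ * ε := by
  -- basic positivity
  have hτε0 : 0 < τ * ε := mul_pos (lt_trans one_pos hτ) hε
  set S : ℝ := ∑' n : ℕ, (gε (n+1))^2 with hSdef
  have hSnn : 0 ≤ S := tsum_nonneg fun n => sq_nonneg _
  have hy : (τ*ε)^2 < S := by
    nlinarith [Real.sq_sqrt hSnn, Real.sqrt_nonneg S, hτε]
  set y : ℝ := (τ*ε)^2 with hydef
  have hy0 : 0 < y := pow_pos hτε0 2
  -- continuity of A and Bf
  have hIcc : Set.uIcc (0:ℝ) T = Set.Icc 0 T := Set.uIcc_of_le hT.le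
  have hAc : ContinuousOn A (Set.Icc 0 T) := by
    have hAeq : A = fun t => ∫ s in (0:ℝ)..t, a s := funext hA
    rw [hAeq, ← hIcc]
    exact intervalIntegral.continuousOn_primitive_interval
      (by rw [hIcc]; exact ha.integrableOn_Icc)
  have hBfc : ContinuousOn Bf (Set.Icc 0 T) := by
    have hBeq : Bf = fun t => A t - A T := funext hBf
    rw [hBeq]; exact hAc.sub continuousOn_const
  -- positivity of the coefficients c n = Φ (n+1) φε
  set c : ℕ → ℝ := fun n => Φ (n+1) φε with hcdef
  have hcpos : ∀ n, 0 < c n := by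
    intro n
    show 0 < Φ (n+1) φε
    rw [hΦ]
    have hcont2 : ContinuousOn
        (fun t => Real.exp ((((n:ℕ)+1:ℕ):ℝ)^2 * Bf t) * φε t) (Set.Icc 0 T) :=
      (Real.continuous_exp.comp_continuousOn (continuousOn_const.mul hBfc)).mul hφεc
    apply intervalIntegral.intervalIntegral_pos_of_pos_on
    · apply ContinuousOn.intervalIntegrable
      rw [hIcc]; exact hcont2
    · intro x hx
      exact mul_pos (Real.exp_pos _)
        (lt_of_lt_of_le hC₁ (hφεB x (Set.Ioo_subset_Icc_self hx)).1)
    · exact hT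
  -- the summand terms
  set term : ℕ → ℝ → ℝ := fun n μ => (μ^2 / (μ^2 + (c n)^2))^2 * (gε (n+1))^2
    with htermdef
  have hρ' : ∀ μ, ρ μ = Real.sqrt (∑' n, term n μ) := hρ
  have hden : ∀ (n : ℕ) (μ : ℝ), 0 < μ^2 + (c n)^2 := fun n μ =>
    add_pos_of_nonneg_of_pos (sq_nonneg μ) (pow_pos (hcpos n) 2)
  have hfrac_nn : ∀ (n : ℕ) (μ : ℝ), 0 ≤ μ^2 / (μ^2 + (c n)^2) := fun n μ =>
    div_nonneg (sq_nonneg _) (hden n μ).le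
  have hfrac_le : ∀ (n : ℕ) (μ : ℝ), μ^2 / (μ^2 + (c n)^2) ≤ 1 := fun n μ =>
    (div_le_one (hden n μ)).mpr (le_add_of_nonneg_right (sq_nonneg _))
  have hterm_nn : ∀ (n : ℕ) (μ : ℝ), 0 ≤ term n μ := fun n μ =>
    mul_nonneg (sq_nonneg _) (sq_nonneg _)
  have hterm_le : ∀ (n : ℕ) (μ : ℝ), term n μ ≤ (gε (n+1))^2 := by
    intro n μ
    have h1 : (μ^2 / (μ^2 + (c n)^2))^2 ≤ 1 :=
      pow_le_one₀ (hfrac_nn n μ) (hfrac_le n μ)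
    calc term n μ ≤ 1 * (gε (n+1))^2 :=
          mul_le_mul_of_nonneg_right h1 (sq_nonneg _)
      _ = (gε (n+1))^2 := one_mul _
  have hsummable : ∀ μ : ℝ, Summable (fun n => term n μ) := fun μ =>
    Summable.of_nonneg_of_le (fun n => hterm_nn n μ) (fun n => hterm_le n μ) hgεsum
  set f : ℝ → ℝ := fun μ => ∑' n, term n μ with hfdef
  have hf_nn : ∀ μ, 0 ≤ f μ := fun μ => tsum_nonneg fun n => hterm_nn n μ
  -- continuity of f
  have hfc : Continuous f := by
    apply continuous_tsum (u := fun n => (gε (n+1))^2)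
    · intro n
      exact (((continuous_pow 2).div ((continuous_pow 2).add continuous_const)
        (fun μ => (hden n μ).ne')).pow 2).mul continuous_const
    · exact hgεsum
    · intro n μ
      rw [Real.norm_eq_abs, abs_of_nonneg (hterm_nn n μ)]
      exact hterm_le n μ
  -- monotonicity
  have hfrac_mono : ∀ (n : ℕ) {μ₁ μ₂ : ℝ}, 0 ≤ μ₁ → μ₁ < μ₂ →
      μ₁^2 / (μ₁^2 + (c n)^2) < μ₂^2 / (μ₂^2 + (c n)^2) := by
    intro n μ₁ μ₂ h0 h12
    rw [div_lt_div_iff₀ (hden n μ₁) (hden n μ₂)]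
    have hsq : μ₁^2 < μ₂^2 := by nlinarith
    nlinarith [pow_pos (hcpos n) 2]
  have hterm_mono : ∀ (n : ℕ) {μ₁ μ₂ : ℝ}, 0 ≤ μ₁ → μ₁ < μ₂ →
      term n μ₁ ≤ term n μ₂ := by
    intro n μ₁ μ₂ h0 h12
    apply mul_le_mul_of_nonneg_right _ (sq_nonneg _)
    exact pow_le_pow_left₀ (hfrac_nn n μ₁) (hfrac_mono n h0 h12).le 2
  -- there is a nonzero coefficient
  obtain ⟨n₀, hn₀⟩ : ∃ n : ℕ, gε (n+1) ≠ 0 := by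
    by_contra h
    push_neg at h
    have : S = 0 := by
      rw [hSdef]
      convert tsum_zero with n
      rw [h n]; ring
    linarith
  have hterm_smono : ∀ {μ₁ μ₂ : ℝ}, 0 < μ₁ → μ₁ < μ₂ →
      term n₀ μ₁ < term n₀ μ₂ := by
    intro μ₁ μ₂ h0 h12
    apply mul_lt_mul_of_pos_right _ (by positivity)
    apply pow_lt_pow_left₀ (hfrac_mono n₀ h0.le h12) (hfrac_nn n₀ μ₁) two_ne_zero
  have hf_smono : ∀ {μ₁ μ₂ : ℝ}, 0 < μ₁ → μ₁ < μ₂ → f μ₁ < f μ₂ := by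
    intro μ₁ μ₂ h0 h12
    exact Summable.tsum_lt_tsum_of_nonneg (fun n => hterm_nn n μ₁)
      (fun n => hterm_mono n h0.le h12) (hterm_smono h0 h12) (hsummable μ₂)
  -- f 0 = 0
  have hf0 : f 0 = 0 := by
    rw [hfdef]
    convert tsum_zero with n
    simp [htermdef]
  -- find a point where f is large
  obtain ⟨N, hN⟩ : ∃ N : ℕ, y < ∑ n ∈ Finset.range N, (gε (n+1))^2 := by
    have h1 := hgεsum.hasSum.tendsto_sum_nat
    exact (h1.eventually (eventually_gt_nhds hy)).exists
  have hterm_lim : ∀ n : ℕ, Tendsto (fun μ => term n μ) atTop (𝓝 ((gε (n+1))^2)) := by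
    intro n
    have hdenlim : Tendsto (fun μ : ℝ => μ^2 + (c n)^2) atTop atTop :=
      tendsto_atTop_add_const_right _ _ (tendsto_pow_atTop two_ne_zero)
    have h0 : Tendsto (fun μ : ℝ => (c n)^2 / (μ^2 + (c n)^2)) atTop (𝓝 0) :=
      Tendsto.div_atTop tendsto_const_nhds hdenlim
    have hfraceq : ∀ μ : ℝ, μ^2 / (μ^2 + (c n)^2) = 1 - (c n)^2 / (μ^2 + (c n)^2) := by
      intro μ
      rw [eq_sub_iff_add_eq, ← add_div, div_self (hden n μ).ne']
    have hfraclim : Tendsto (fun μ : ℝ => μ^2 / (μ^2 + (c n)^2)) atTop (𝓝 1) := by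
      simp_rw [hfraceq]
      have := (tendsto_const_nhds (x := (1:ℝ)) (f := atTop)).sub h0
      simpa using this
    have := (hfraclim.pow 2).mul_const ((gε (n+1))^2)
    simpa using this
  have hsumlim : Tendsto (fun μ => ∑ n ∈ Finset.range N, term n μ) atTop
      (𝓝 (∑ n ∈ Finset.range N, (gε (n+1))^2)) :=
    tendsto_finset_sum _ fun n _ => hterm_lim n
  obtain ⟨μ₀, hμ₀1, hμ₀⟩ : ∃ μ₀ : ℝ, 1 ≤ μ₀ ∧ y < ∑ n ∈ Finset.range N, term n μ₀ := by
    have h1 := hsumlim.eventually (eventually_gt_nhds hN)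
    obtain ⟨μ₀, h2, h3⟩ := (eventually_ge_atTop (1:ℝ)).and h1 |>.exists
    exact ⟨μ₀, h2, h3⟩
  have hfμ₀ : y < f μ₀ :=
    lt_of_lt_of_le hμ₀ (Summable.sum_le_tsum _ (fun n _ => hterm_nn n μ₀) (hsummable μ₀))
  -- intermediate value theorem
  obtain ⟨x, hxmem, hfx⟩ : ∃ x ∈ Set.Icc (0:ℝ) μ₀, f x = y := by
    have := intermediate_value_Icc (by linarith : (0:ℝ) ≤ μ₀) hfc.continuousOn
    exact this ⟨by rw [hf0]; exact hy0.le, hfμ₀.le⟩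
  have hx0 : 0 < x := by
    rcases eq_or_lt_of_le hxmem.1 with h | h
    · exfalso; rw [← h] at hfx; rw [hf0] at hfx; linarith
    · exact h
  have hρx : ρ x = τ * ε := by
    rw [hρ' x]
    show Real.sqrt (f x) = τ * ε
    rw [hfx, hydef, Real.sqrt_sq hτε0.le]
  refine ⟨x, ⟨hx0, hρx⟩, ?_⟩
  -- uniqueness
  intro μ' ⟨hμ'0, hρμ'⟩
  have hfμ' : f μ' = y := by
    have h1 : Real.sqrt (f μ') = τ * ε := by rw [← hρ' μ']; exact hρμ'
    have := Real.sq_sqrt (hf_nn μ')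
    rw [h1] at this
    rw [← this, hydef]
  rcases lt_trichotomy μ' x with h | h | h
  · exfalso; have := hf_smono hμ'0 h; rw [hfμ', hfx] at this; linarith
  · exact h
  · exfalso; have := hf_smono hx0 h; rw [hfμ', hfx] at this; linarith
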